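/- arXiv:1710.07365 — 2 statements merged into one kernel-verified Lean document; each statement's English description precedes it below -/
import Mathlib

section
/- For the two-graph Moran process with undirected resident graph G_R having maximum adjacent-weight ratio c and mutant graph the clique on n vertices, if r ≥ 2c(1 + 2/(n−5)) then for any initial mutant set S the expected absorption time τ satisfies E[τ | X₀ = S] ≤ (r/(r−c))·n·(n − |S|); in particular E[τ] ≤ (r/(r−c))·n². -/
open Finset

variable {V : Type*} [Fintype V] [DecidableEq V]

/-- One-step transition probability of the two-graph Moran process with relative fitness `r`,
resident weight matrix `wR` and mutant weight matrix `wM`, from mutant set `S` to set `T`.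
An individual is chosen with probability proportional to its fitness (residents `1`,
mutants `r`) and reproduces on a neighbour in its own graph. -/
noncomputable def moranStep (r : ℝ) (wR wM : V → V → ℝ) (S T : Finset V) : ℝ :=
  ((∑ i ∈ S, ∑ j ∈ Sᶜ, (if T = insert j S then r * wM i j else 0)) +
   (∑ j ∈ Sᶜ, ∑ i ∈ S, (if T = S.erase i then wR j i else 0)) +
   (if T = S then (∑ i ∈ S, ∑ j ∈ S, r * wM i j) + (∑ i ∈ Sᶜ, ∑ j ∈ Sᶜ, wR i j) else 0))
  / (S.card * r + ((Fintype.card V : ℝ) - S.card))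

/-- `t`-step transition probabilities of the two-graph Moran process. -/
noncomputable def moranIter (r : ℝ) (wR wM : V → V → ℝ) : ℕ → Finset V → Finset V → ℝ
  | 0 => fun S T => if T = S then 1 else 0
  | (t + 1) => fun S T => ∑ U : Finset V, moranStep r wR wM S U * moranIter r wR wM t U T

/-- Fixation probability of the two-graph Moran process started from mutant set `S`:
the probability of eventual absorption at the all-mutant state `V` (the probability of
being at the absorbing state `univ` is nondecreasing in `t`, so the limit is the `⨆`). -/
noncomputable def fixProbFrom (r : ℝ) (wR wM : V → V → ℝ) (S : Finset V) : ℝ :=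
  ⨆ t : ℕ, moranIter r wR wM t S Finset.univ

/-- Fixation probability of the two-graph Moran process started from a single
uniformly random mutant. -/
noncomputable def fixProb (r : ℝ) (wR wM : V → V → ℝ) : ℝ :=
  (∑ u : V, fixProbFrom r wR wM {u}) / (Fintype.card V)

/-- A weight matrix is a strongly connected graph structure: positive-weight edges
connect every ordered pair of vertices. -/
def StronglyConnectedW (w : V → V → ℝ) : Prop :=
  ∀ i j : V, Relation.ReflTransGen (fun a b => 0 < w a b) i j

/-- Admissible weight matrix: nonnegative, zero diagonal, rows sum to 1. -/
def IsWeightMatrix (w : V → V → ℝ) : Prop :=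
  (∀ i j, 0 ≤ w i j) ∧ (∀ i, w i i = 0) ∧ (∀ i, ∑ j, w i j = 1)

/-- `moranSurv r wR wM t S` is the probability that the two-graph Moran process started from
mutant set `S` has not been absorbed (at `∅` or `V`) after `t` steps; hence
`E[τ | X₀ = S] = Σ_t moranSurv r wR wM t S` where `τ` is the absorption time. -/
noncomputable def moranSurv {V : Type*} [Fintype V] [DecidableEq V]
    (r : ℝ) (wR wM : V → V → ℝ) : ℕ → Finset V → ℝ
  | 0 => fun S => if S = ∅ ∨ S = Finset.univ then 0 else 1
  | (t + 1) => fun S =>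
      if S = ∅ ∨ S = Finset.univ then 0
      else ∑ T : Finset V, moranStep r wR wM S T * moranSurv r wR wM t T

/-- auxiliary: sum of step probabilities times a function -/
lemma sum_moranStep_mul (r : ℝ) (wR wM : V → V → ℝ) (S : Finset V) (g : Finset V → ℝ) :
    ∑ T : Finset V, moranStep r wR wM S T * g T =
      ((∑ i ∈ S, ∑ j ∈ Sᶜ, r * wM i j * g (insert j S)) +
       (∑ j ∈ Sᶜ, ∑ i ∈ S, wR j i * g (S.erase i)) +
       ((∑ i ∈ S, ∑ j ∈ S, r * wM i j) + (∑ i ∈ Sᶜ, ∑ j ∈ Sᶜ, wR i j)) * g S) /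
      (S.card * r + ((Fintype.card V : ℝ) - S.card)) := by
  unfold moranStep
  simp only [div_mul_eq_mul_div]
  rw [← Finset.sum_div]
  congr 1
  have expand : ∀ T : Finset V,
      ((∑ i ∈ S, ∑ j ∈ Sᶜ, (if T = insert j S then r * wM i j else 0)) +
       (∑ j ∈ Sᶜ, ∑ i ∈ S, (if T = S.erase i then wR j i else 0)) +
       (if T = S then (∑ i ∈ S, ∑ j ∈ S, r * wM i j) + (∑ i ∈ Sᶜ, ∑ j ∈ Sᶜ, wR i j) else 0)) * g T
      = (∑ i ∈ S, ∑ j ∈ Sᶜ, (if T = insert j S then r * wM i j else 0) * g T) +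
        (∑ j ∈ Sᶜ, ∑ i ∈ S, (if T = S.erase i then wR j i else 0) * g T) +
        (if T = S then (∑ i ∈ S, ∑ j ∈ S, r * wM i j) + (∑ i ∈ Sᶜ, ∑ j ∈ Sᶜ, wR i j) else 0) * g T := by
    intro T
    simp only [add_mul, Finset.sum_mul]
  rw [Finset.sum_congr rfl fun T _ => expand T]
  rw [Finset.sum_add_distrib, Finset.sum_add_distrib]
  congr 1
  · congr 1
    · rw [Finset.sum_comm]
      refine Finset.sum_congr rfl fun i _ => ?_
      rw [Finset.sum_comm]
      refine Finset.sum_congr rfl fun j _ => ?_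
      simp only [ite_mul, zero_mul]
      rw [Finset.sum_ite_eq' Finset.univ (insert j S) (fun T => r * wM i j * g T)]
      simp
    · rw [Finset.sum_comm]
      refine Finset.sum_congr rfl fun j _ => ?_
      rw [Finset.sum_comm]
      refine Finset.sum_congr rfl fun i _ => ?_
      simp only [ite_mul, zero_mul]
      rw [Finset.sum_ite_eq' Finset.univ (S.erase i) (fun T => wR j i * g T)]
      simp
  · simp only [ite_mul, zero_mul]
    rw [Finset.sum_ite_eq' Finset.univ S (fun T => ((∑ i ∈ S, ∑ j ∈ S, r * wM i j) + (∑ i ∈ Sᶜ, ∑ j ∈ Sᶜ, wR i j)) * g T)]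
    simp

lemma drift_caseA (n c r k : ℝ) (hn : 6 ≤ n) (hc : 1 ≤ c) (hr : r * (n-5) ≥ 2*c*(n-3))
    (hk1 : 1 ≤ k) (hk2 : k ≤ n - 1) (hcase : c*k ≤ n - k) :
    r*k*(n-k) ≥ (n-1)*(c*k) + (n-1)*(r-c) := by
  have hr0 : (0:ℝ) < r := by nlinarith
  nlinarith [mul_nonneg (sub_nonneg.2 hk1) (sub_nonneg.2 hk2), sq_nonneg (k-1), sq_nonneg (n-1-k),
    mul_nonneg (mul_nonneg (sub_nonneg.2 hk1) (sub_nonneg.2 hk2)) (le_trans (by norm_num) hc),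
    mul_le_mul_of_nonneg_left hcase hr0.le,
    mul_nonneg (sub_nonneg.2 hk1) (sub_nonneg.2 hc)]

lemma drift_caseB (n c r k : ℝ) (hn : 6 ≤ n) (hc : 1 ≤ c) (hr : r * (n-5) ≥ 2*c*(n-3))
    (hk1 : 1 ≤ k) (hk2 : k ≤ n - 1) (hcase : n - k ≤ c*k) :
    r*k*(n-k) ≥ (n-1)*(n-k) + (n-1)*(r-c) := by
  have hr0 : (0:ℝ) < r := by nlinarith
  rcases le_or_gt (n - k) c with h | h
  · nlinarith [mul_nonneg (mul_nonneg hr0.le (sub_nonneg.2 hk1)) (sub_nonneg.2 hk2)]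
  · have hc1 : (0:ℝ) < 1 + c := by linarith
    have ha : 0 ≤ n - 1 - c := by linarith
    have hA : (1+c) * (k - 1) - (n - 1 - c) ≥ 0 := by nlinarith
    have hB : (1+c) * ((n-k) - c) - c * (n - 1 - c) ≤ 0 := by nlinarith
    have key : r * (c*n - c - 1) - c*(n-1)*(1+c) ≥ 0 := by
      nlinarith [mul_nonneg (sub_nonneg.2 hc) (show (0:ℝ) ≤ n - 5 by linarith),
        mul_nonneg (sub_nonneg.2 hc) (show (0:ℝ) ≤ n - 1 by linarith),
        mul_nonneg (mul_nonneg (sub_nonneg.2 hc) (sub_nonneg.2 hc)) (show (0:ℝ) ≤ n - 5 by linarith)]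
    have P1 : 0 ≤ r * ((n-k) - 1) * ((1+c)*(k-1) - (n-1-c)) :=
      mul_nonneg (mul_nonneg hr0.le (by linarith)) (by linarith)
    rcases le_or_gt ((n-1)*(1+c)) (r * (n-1-c)) with hco | hco
    · have P2 : 0 ≤ (r*(n-1-c) - (n-1)*(1+c)) * ((n-k) - c) :=
        mul_nonneg (by linarith) (by linarith)
      nlinarith [P1, P2, mul_nonneg (mul_nonneg hr0.le ha) (sub_nonneg.2 hc), sq_nonneg (1+c),
        mul_nonneg ha (sub_nonneg.2 hc), hc1.le]
    · have P2' : 0 ≤ (r*(n-1-c) - (n-1)*(1+c)) * ((1+c)*((n-k)-c) - c*(n-1-c)) := by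
        nlinarith [mul_nonneg (show (0:ℝ) ≤ (n-1)*(1+c) - r*(n-1-c) by linarith)
          (show (0:ℝ) ≤ c*(n-1-c) - (1+c)*((n-k)-c) by linarith)]
      have P3 : 0 ≤ (n-1-c) * (r * (c*n - c - 1) - c*(n-1)*(1+c)) := mul_nonneg ha (by linarith)
      nlinarith [P1, P2', P3, sq_nonneg (1+c), hc1.le, mul_pos hc1 hc1]

lemma drift_key (n c r k B : ℝ) (hn : 6 ≤ n) (hc : 1 ≤ c) (hr : r * (n-5) ≥ 2*c*(n-3))
    (hk1 : 1 ≤ k) (hk2 : k ≤ n - 1) (hB1 : B ≤ c*k) (hB2 : B ≤ n - k) :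
    (r - c + B) * (n-1) ≤ r*k*(n-k) := by
  have hn1 : (0:ℝ) < n - 1 := by linarith
  rcases le_total (c*k) (n-k) with hcase | hcase
  · have h4 := mul_le_mul_of_nonneg_right hB1 hn1.le
    have h5' := drift_caseA n c r k hn hc hr hk1 hk2 hcase
    nlinarith [h4, h5']
  · have h4 := mul_le_mul_of_nonneg_right hB2 hn1.le
    have h5' := drift_caseB n c r k hn hc hr hk1 hk2 hcase
    nlinarith [h4, h5']

lemma drift_final (K D A B C n k r c : ℝ) (hD : 0 < D) (hK : 0 ≤ K)
    (hsum : r*A + B + C = D) (hAB : r - c ≤ r*A - B) (hKrc : K*(r-c) = r*n) (hDrn : D ≤ r*n) :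
    1 + (A*(r*(K*(n-(k+1)))) + B*(K*(n-(k-1))) + C*(K*(n-k)))/D ≤ K*(n-k) := by
  have hC : C = D - r*A - B := by linarith
  subst hC
  have hdiv : (A*(r*(K*(n-(k+1)))) + B*(K*(n-(k-1))) + (D - r*A - B)*(K*(n-k)))/D ≤ K*(n-k) - 1 := by
    rw [div_le_iff₀ hD]
    nlinarith [mul_le_mul_of_nonneg_left hAB hK]
  linarith


/-- **Polynomial bound on the expected absorption time.** For the two-graph Moran process
with undirected resident graph `wR` having maximum adjacent weight ratio at most `c` and
mutant graph the clique on `n ≥ 6` vertices, if `r ≥ 2c(1 + 2/(n−5))` then for any initial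
mutant set `S` the expected absorption time satisfies
`E[τ | X₀ = S] ≤ (r/(r−c))·n·(n − |S|)`; in particular, for a uniformly random initial
single mutant, `E[τ] ≤ (r/(r−c))·n²`. -/
theorem moran_absorption_time_bound
    {V : Type*} [Fintype V] [DecidableEq V]
    (hn : 6 ≤ Fintype.card V)
    (c r : ℝ) (hc : 0 < c)
    (hr : r ≥ 2 * c * (1 + 2 / ((Fintype.card V : ℝ) - 5)))
    (wR wM : V → V → ℝ)
    (hwR : IsWeightMatrix wR)
    (hundir : ∀ i j, 0 < wR i j ↔ 0 < wR j i)
    (hratio : ∀ i j, 0 < wR i j → wR i j / wR j i ≤ c)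
    (hwM : ∀ i j, wM i j = if i = j then 0 else 1 / ((Fintype.card V : ℝ) - 1)) :
    (∀ S : Finset V,
      ∑' t : ℕ, moranSurv r wR wM t S ≤
        r / (r - c) * (Fintype.card V : ℝ) * ((Fintype.card V : ℝ) - S.card)) ∧
    (∑ u : V, ∑' t : ℕ, moranSurv r wR wM t {u}) / (Fintype.card V : ℝ) ≤
      r / (r - c) * (Fintype.card V : ℝ) ^ 2 := by
  classical
  set n : ℝ := (Fintype.card V : ℝ) with hndef
  obtain ⟨hR0, hRd, hRs⟩ := hwR
  have hn6 : (6:ℝ) ≤ n := by rw [hndef]; exact_mod_cast hn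
  have h5 : (0:ℝ) < n - 5 := by linarith
  have hn0 : (0:ℝ) < n := by linarith
  have hn1 : (0:ℝ) < n - 1 := by linarith
  -- c ≥ 1
  have hc1 : 1 ≤ c := by
    have hne : Nonempty V := Fintype.card_pos_iff.1 (by omega)
    obtain ⟨i⟩ := hne
    have hex : ∃ j, 0 < wR i j := by
      by_contra hcon
      push_neg at hcon
      have hz : ∑ j, wR i j = 0 := Finset.sum_eq_zero fun j _ => le_antisymm (hcon j) (hR0 i j)
      rw [hRs i] at hz; norm_num at hz
    obtain ⟨j, hij⟩ := hex
    have hji : 0 < wR j i := (hundir i j).1 hij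
    have h1 := hratio i j hij
    have h2 := hratio j i hji
    rcases le_total (wR i j) (wR j i) with h | h
    · have : (1:ℝ) ≤ wR j i / wR i j := (one_le_div hij).2 h
      linarith
    · have : (1:ℝ) ≤ wR i j / wR j i := (one_le_div hji).2 h
      linarith
  have hr2 : 2*c ≤ r := by
    have h2p : (0:ℝ) < 2/(n-5) := by positivity
    nlinarith [mul_pos hc h2p]
  have hrc : (0:ℝ) < r - c := by linarith
  have hr1 : (1:ℝ) ≤ r := by linarith
  have hr0 : (0:ℝ) < r := by linarith
  have hr5 : 2*c*(n-3) ≤ r*(n-5) := by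
    have e : 2*c*(1+2/(n-5))*(n-5) = 2*c*(n-3) := by field_simp; ring
    have := mul_le_mul_of_nonneg_right hr.le h5.le
    rw [e] at this; exact this
  set K : ℝ := r / (r - c) * n with hKdef
  have hK0 : 0 ≤ K := by positivity
  have hKrc : K * (r - c) = r * n := by
    rw [hKdef]; field_simp
  -- weight matrix facts
  have hM0 : ∀ i j, 0 ≤ wM i j := fun i j => by
    rw [hwM]; split
    · exact le_rfl
    · positivity
  have hMrow : ∀ i : V, ∑ j, wM i j = 1 := by
    intro i
    rw [← Finset.add_sum_erase Finset.univ (wM i) (Finset.mem_univ i)]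
    have h0 : wM i i = 0 := by rw [hwM]; simp
    have hrest : ∀ j ∈ Finset.univ.erase i, wM i j = 1/(n-1) := fun j hj => by
      rw [hwM, if_neg]
      exact fun h => (Finset.mem_erase.1 hj).1 h.symm
    rw [h0, zero_add, Finset.sum_congr rfl hrest, Finset.sum_const,
      Finset.card_erase_of_mem (Finset.mem_univ i), Finset.card_univ, nsmul_eq_mul,
      Nat.cast_sub (by omega), Nat.cast_one]
    field_simp
    rfl
  -- positivity of denominators
  have hDpos : ∀ S : Finset V, 0 < (S.card:ℝ)*r + (n - S.card) := by
    intro S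
    have h1 : (0:ℝ) ≤ (S.card:ℝ) := Nat.cast_nonneg _
    nlinarith
  -- step probabilities are nonnegative
  have hstep0 : ∀ S T : Finset V, 0 ≤ moranStep r wR wM S T := by
    intro S T
    unfold moranStep
    apply div_nonneg
    · refine add_nonneg (add_nonneg ?_ ?_) ?_
      · refine Finset.sum_nonneg fun i _ => Finset.sum_nonneg fun j _ => ?_
        split
        · exact mul_nonneg hr0.le (hM0 i j)
        · exact le_refl 0
      · refine Finset.sum_nonneg fun j _ => Finset.sum_nonneg fun i _ => ?_
        split
        · exact hR0 j i
        · exact le_refl 0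
      · split
        · refine add_nonneg ?_ ?_
          · exact Finset.sum_nonneg fun i _ => Finset.sum_nonneg fun j _ =>
              mul_nonneg hr0.le (hM0 i j)
          · exact Finset.sum_nonneg fun i _ => Finset.sum_nonneg fun j _ => hR0 i j
        · exact le_refl 0
    · exact (hDpos S).le
  -- survival probabilities nonnegative
  have hsurv0 : ∀ (s : ℕ) (S : Finset V), 0 ≤ moranSurv r wR wM s S := by
    intro s
    induction s with
    | zero =>
      intro S
      show (0:ℝ) ≤ if S = ∅ ∨ S = Finset.univ then 0 else 1
      split <;> norm_num
    | succ t ih =>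
      intro S
      show (0:ℝ) ≤ if S = ∅ ∨ S = Finset.univ then 0
        else ∑ T : Finset V, moranStep r wR wM S T * moranSurv r wR wM t T
      split
      · exact le_refl 0
      · exact Finset.sum_nonneg fun T _ => mul_nonneg (hstep0 S T) (ih T)
  -- K(n - |S|) is nonnegative
  have hpot0 : ∀ S : Finset V, 0 ≤ K * (n - S.card) := by
    intro S
    apply mul_nonneg hK0
    have : (S.card:ℝ) ≤ n := by rw [hndef]; exact_mod_cast Finset.card_le_univ S
    linarith
  -- the drift inequality
  have hdrift : ∀ S : Finset V, S ≠ ∅ → S ≠ Finset.univ →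
      1 + ∑ T : Finset V, moranStep r wR wM S T * (K * (n - T.card)) ≤ K * (n - S.card) := by
    intro S hS hSu
    have hSne : S.Nonempty := Finset.nonempty_iff_ne_empty.2 hS
    have hk1 : (1:ℝ) ≤ (S.card:ℝ) := by exact_mod_cast Finset.card_pos.2 hSne
    have hklt : S.card < Fintype.card V := by
      have := Finset.card_lt_card (Finset.ssubset_univ_iff.2 hSu)
      simpa using this
    have hkn : (S.card:ℝ) ≤ n - 1 := by
      have : (S.card:ℝ) + 1 ≤ n := by rw [hndef]; exact_mod_cast hklt
      linarith
    have hcompl : ((Sᶜ : Finset V).card : ℝ) = n - S.card := by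
      rw [Finset.card_compl, Nat.cast_sub (Finset.card_le_univ S)]
    -- the three sums
    have E := sum_moranStep_mul r wR wM S (fun T => K * (n - T.card))
    have e1 : ∑ i ∈ S, ∑ j ∈ Sᶜ, r * wM i j * (K * (n - ((insert j S).card : ℝ))) =
        (∑ i ∈ S, ∑ j ∈ Sᶜ, wM i j) * (r * (K * (n - ((S.card:ℝ) + 1)))) := by
      calc ∑ i ∈ S, ∑ j ∈ Sᶜ, r * wM i j * (K * (n - ((insert j S).card : ℝ)))
          = ∑ i ∈ S, ∑ j ∈ Sᶜ, wM i j * (r * (K * (n - ((S.card:ℝ) + 1)))) := by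
            refine Finset.sum_congr rfl fun i _ => Finset.sum_congr rfl fun j hj => ?_
            rw [Finset.card_insert_of_notMem (Finset.mem_compl.1 hj)]
            push_cast
            ring
        _ = ∑ i ∈ S, (∑ j ∈ Sᶜ, wM i j) * (r * (K * (n - ((S.card:ℝ) + 1)))) :=
            Finset.sum_congr rfl fun i _ => (Finset.sum_mul _ _ _).symm
        _ = (∑ i ∈ S, ∑ j ∈ Sᶜ, wM i j) * (r * (K * (n - ((S.card:ℝ) + 1)))) :=
            (Finset.sum_mul _ _ _).symm
    have e2 : ∑ j ∈ Sᶜ, ∑ i ∈ S, wR j i * (K * (n - ((S.erase i).card : ℝ))) =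
        (∑ j ∈ Sᶜ, ∑ i ∈ S, wR j i) * (K * (n - ((S.card:ℝ) - 1))) := by
      calc ∑ j ∈ Sᶜ, ∑ i ∈ S, wR j i * (K * (n - ((S.erase i).card : ℝ)))
          = ∑ j ∈ Sᶜ, ∑ i ∈ S, wR j i * (K * (n - ((S.card:ℝ) - 1))) := by
            refine Finset.sum_congr rfl fun j _ => Finset.sum_congr rfl fun i hi => ?_
            rw [Finset.card_erase_of_mem hi, Nat.cast_sub (Finset.card_pos.2 ⟨i, hi⟩), Nat.cast_one]
        _ = ∑ j ∈ Sᶜ, (∑ i ∈ S, wR j i) * (K * (n - ((S.card:ℝ) - 1))) :=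
            Finset.sum_congr rfl fun j _ => (Finset.sum_mul _ _ _).symm
        _ = (∑ j ∈ Sᶜ, ∑ i ∈ S, wR j i) * (K * (n - ((S.card:ℝ) - 1))) :=
            (Finset.sum_mul _ _ _).symm
    -- value of the mutant-sum
    have hAval : (∑ i ∈ S, ∑ j ∈ Sᶜ, wM i j) = (S.card:ℝ) * (n - S.card) / (n-1) := by
      have hval : ∀ i ∈ S, ∑ j ∈ Sᶜ, wM i j = (n - S.card) * (1/(n-1)) := by
        intro i hi
        have : ∀ j ∈ Sᶜ, wM i j = 1/(n-1) := fun j hj => by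
          rw [hwM, if_neg]
          intro h
          exact (Finset.mem_compl.1 hj) (h ▸ hi)
        rw [Finset.sum_congr rfl this, Finset.sum_const, nsmul_eq_mul, hcompl]
      rw [Finset.sum_congr rfl hval, Finset.sum_const, nsmul_eq_mul]
      field_simp
    -- row sums identities
    have hsum1 : (∑ i ∈ S, ∑ j ∈ S, r * wM i j) + (∑ i ∈ S, ∑ j ∈ Sᶜ, r * wM i j)
        = (S.card:ℝ) * r := by
      rw [← Finset.sum_add_distrib]
      have : ∀ i ∈ S, ((∑ j ∈ S, r * wM i j) + ∑ j ∈ Sᶜ, r * wM i j) = r := by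
        intro i _
        rw [Finset.sum_add_sum_compl, ← Finset.mul_sum, hMrow, mul_one]
      rw [Finset.sum_congr rfl this, Finset.sum_const, nsmul_eq_mul]
    have hsum2 : (∑ j ∈ Sᶜ, ∑ i ∈ S, wR j i) + (∑ i ∈ Sᶜ, ∑ j ∈ Sᶜ, wR i j)
        = n - S.card := by
      rw [← Finset.sum_add_distrib]
      have : ∀ j ∈ Sᶜ, ((∑ i ∈ S, wR j i) + ∑ i ∈ Sᶜ, wR j i) = 1 := by
        intro j _
        rw [Finset.sum_add_sum_compl, hRs]
      rw [Finset.sum_congr rfl this, Finset.sum_const, nsmul_eq_mul, hcompl, mul_one]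
    -- bounds on the backward sum B
    have hrow_le : ∀ (f : V → ℝ) (hf : ∀ x, 0 ≤ f x) (s : Finset V), ∑ x ∈ s, f x ≤ ∑ x, f x :=
      fun f hf s => Finset.sum_le_sum_of_subset_of_nonneg (Finset.subset_univ s)
        (fun x _ _ => hf x)
    have hBle1 : (∑ j ∈ Sᶜ, ∑ i ∈ S, wR j i) ≤ c * S.card := by
      have key2 : ∀ j i : V, wR j i ≤ c * wR i j := by
        intro j i
        rcases (hR0 j i).eq_or_lt with h | h
        · rw [← h]; exact mul_nonneg hc.le (hR0 i j)
        · have hij : 0 < wR i j := (hundir i j).2 h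
          have := hratio j i h
          rw [div_le_iff₀ hij] at this
          linarith
      calc (∑ j ∈ Sᶜ, ∑ i ∈ S, wR j i)
          ≤ ∑ j ∈ Sᶜ, ∑ i ∈ S, c * wR i j :=
            Finset.sum_le_sum fun j _ => Finset.sum_le_sum fun i _ => key2 j i
        _ = c * ∑ j ∈ Sᶜ, ∑ i ∈ S, wR i j := by
            rw [Finset.mul_sum]
            exact Finset.sum_congr rfl fun j _ => by rw [Finset.mul_sum]
        _ = c * ∑ i ∈ S, ∑ j ∈ Sᶜ, wR i j := by rw [Finset.sum_comm]
        _ ≤ c * ∑ i ∈ S, (1:ℝ) := by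
            apply mul_le_mul_of_nonneg_left _ hc.le
            refine Finset.sum_le_sum fun i _ => ?_
            calc ∑ j ∈ Sᶜ, wR i j ≤ ∑ j, wR i j := hrow_le _ (hR0 i) _
              _ = 1 := hRs i
        _ = c * S.card := by rw [Finset.sum_const, nsmul_eq_mul, mul_one]
    have hBle2 : (∑ j ∈ Sᶜ, ∑ i ∈ S, wR j i) ≤ n - S.card := by
      calc (∑ j ∈ Sᶜ, ∑ i ∈ S, wR j i) ≤ ∑ j ∈ Sᶜ, (1:ℝ) := by
            refine Finset.sum_le_sum fun j _ => ?_
            calc ∑ i ∈ S, wR j i ≤ ∑ i, wR j i := hrow_le _ (hR0 j) _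
              _ = 1 := hRs j
        _ = n - S.card := by rw [Finset.sum_const, nsmul_eq_mul, mul_one, hcompl]
    -- the drift bound
    have hAB : r - c ≤ r * (∑ i ∈ S, ∑ j ∈ Sᶜ, wM i j) - (∑ j ∈ Sᶜ, ∑ i ∈ S, wR j i) := by
      have key : (r - c + (∑ j ∈ Sᶜ, ∑ i ∈ S, wR j i)) * (n-1) ≤ r*(S.card:ℝ)*(n-S.card) := by
        have hB1 : (∑ j ∈ Sᶜ, ∑ i ∈ S, wR j i) ≤ c * (S.card:ℝ) := hBle1
        have hB2 : (∑ j ∈ Sᶜ, ∑ i ∈ S, wR j i) ≤ n - (S.card:ℝ) := hBle2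
        exact drift_key n c r (S.card:ℝ) _ hn6 hc1 hr5 hk1 hkn hB1 hB2
      rw [hAval]
      have h3 : r * ((S.card:ℝ)*(n-S.card)/(n-1)) = r*(S.card:ℝ)*(n-S.card)/(n-1) := by ring
      rw [h3, le_sub_iff_add_le, le_div_iff₀ hn1]
      linarith [key]
    -- denominator bound
    have hDrn : (S.card:ℝ)*r + (n - S.card) ≤ r * n := by nlinarith
    -- finish
    rw [E, e1, e2]
    have e1' : (∑ i ∈ S, ∑ j ∈ Sᶜ, wM i j) * (r * (K * (n - ((S.card:ℝ) + 1)))) =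
        (∑ i ∈ S, ∑ j ∈ Sᶜ, wM i j) * (r * (K * (n - ((S.card:ℝ) + 1)))) := rfl
    have hsum' : r * (∑ i ∈ S, ∑ j ∈ Sᶜ, wM i j) + (∑ j ∈ Sᶜ, ∑ i ∈ S, wR j i) +
        ((∑ i ∈ S, ∑ j ∈ S, r * wM i j) + (∑ i ∈ Sᶜ, ∑ j ∈ Sᶜ, wR i j))
        = (S.card:ℝ)*r + (n - S.card) := by
      have : r * (∑ i ∈ S, ∑ j ∈ Sᶜ, wM i j) = ∑ i ∈ S, ∑ j ∈ Sᶜ, r * wM i j := by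
        rw [Finset.mul_sum]
        exact Finset.sum_congr rfl fun i _ => by rw [Finset.mul_sum]
      rw [this]
      linarith [hsum1, hsum2]
    exact drift_final K ((S.card:ℝ)*r + (n - S.card)) (∑ i ∈ S, ∑ j ∈ Sᶜ, wM i j)
      (∑ j ∈ Sᶜ, ∑ i ∈ S, wR j i)
      ((∑ i ∈ S, ∑ j ∈ S, r * wM i j) + (∑ i ∈ Sᶜ, ∑ j ∈ Sᶜ, wR i j))
      n (S.card:ℝ) r c (hDpos S) hK0 hsum' hAB hKrc hDrn
  -- partial sums of survival probabilities are bounded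
  have hpart : ∀ (t : ℕ) (S : Finset V),
      ∑ s ∈ Finset.range t, moranSurv r wR wM s S ≤ K * (n - S.card) := by
    intro t
    induction t with
    | zero => intro S; simpa using hpot0 S
    | succ t ih =>
      intro S
      by_cases habs : S = ∅ ∨ S = Finset.univ
      · have hz : ∀ s, moranSurv r wR wM s S = 0 := by
          intro s
          cases s with
          | zero => show (if S = ∅ ∨ S = Finset.univ then (0:ℝ) else 1) = 0; rw [if_pos habs]
          | succ m =>
            show (if S = ∅ ∨ S = Finset.univ then (0:ℝ) else _) = 0
            rw [if_pos habs]
        calc ∑ s ∈ Finset.range (t+1), moranSurv r wR wM s S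
            = 0 := Finset.sum_eq_zero fun s _ => hz s
          _ ≤ K * (n - S.card) := hpot0 S
      · rw [not_or] at habs
        have h0 : moranSurv r wR wM 0 S = 1 := by
          show (if S = ∅ ∨ S = Finset.univ then (0:ℝ) else 1) = 1
          rw [if_neg (by tauto)]
        have hsucc : ∀ s, moranSurv r wR wM (s+1) S
            = ∑ T : Finset V, moranStep r wR wM S T * moranSurv r wR wM s T := by
          intro s
          show (if S = ∅ ∨ S = Finset.univ then (0:ℝ) else _) = _
          rw [if_neg (by tauto)]
        calc ∑ s ∈ Finset.range (t+1), moranSurv r wR wM s S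
            = (∑ s ∈ Finset.range t, moranSurv r wR wM (s+1) S) + moranSurv r wR wM 0 S :=
              Finset.sum_range_succ' _ _
          _ = (∑ s ∈ Finset.range t, ∑ T : Finset V,
                moranStep r wR wM S T * moranSurv r wR wM s T) + 1 := by
              rw [h0, Finset.sum_congr rfl fun s _ => hsucc s]
          _ = 1 + ∑ T : Finset V, moranStep r wR wM S T *
                (∑ s ∈ Finset.range t, moranSurv r wR wM s T) := by
              rw [Finset.sum_comm]
              rw [add_comm]
              congr 1
              exact Finset.sum_congr rfl fun T _ => by rw [Finset.mul_sum]
          _ ≤ 1 + ∑ T : Finset V, moranStep r wR wM S T * (K * (n - T.card)) := by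
              gcongr with T hT
              · exact hstep0 S T
              · exact ih T
          _ ≤ K * (n - S.card) := hdrift S habs.1 habs.2
  have part1 : ∀ S : Finset V, ∑' t : ℕ, moranSurv r wR wM t S ≤ K * (n - S.card) :=
    fun S => Real.tsum_le_of_sum_range_le (fun s => hsurv0 s S) (fun t => hpart t S)
  constructor
  · exact fun S => part1 S
  · rw [div_le_iff₀ hn0]
    have hb : ∀ u : V, ∑' t : ℕ, moranSurv r wR wM t {u} ≤ K * (n - 1) := by
      intro u
      have := part1 {u}
      simpa using this
    calc (∑ u : V, ∑' t : ℕ, moranSurv r wR wM t {u})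
        ≤ ∑ _u : V, K * (n - 1) := Finset.sum_le_sum fun u _ => hb u
      _ = n * (K * (n-1)) := by rw [Finset.sum_const, nsmul_eq_mul, Finset.card_univ]
      _ ≤ r / (r - c) * n ^ 2 * n := by nlinarith [hK0, hn0, hKdef]
end

section
/- For any pair of strongly connected digraphs G_R, G_M on n vertices and any r > 0, the fixation probability f_{G_R,G_M} of the two-graph Moran process started from a single uniformly random mutant is at most 1 − 1/(r+n). -/
open Finset

variable {V : Type*} [Fintype V] [DecidableEq V]

section Aux

variable [Nonempty V] {r : ℝ} {wR wM : V → V → ℝ}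

lemma moran_denom_pos (hr : 0 < r) (S : Finset V) :
    0 < (S.card : ℝ) * r + ((Fintype.card V : ℝ) - S.card) := by
  have hc : (S.card : ℝ) ≤ Fintype.card V := by exact_mod_cast Finset.card_le_univ S
  have hn : (1 : ℝ) ≤ Fintype.card V := by exact_mod_cast Fintype.card_pos
  rcases Nat.eq_zero_or_pos S.card with h | h
  · rw [h]; push_cast; linarith
  · have h1 : (1 : ℝ) ≤ S.card := by exact_mod_cast h
    nlinarith

lemma moranStep_nonneg (hr : 0 < r) (hRn : ∀ i j, 0 ≤ wR i j) (hMn : ∀ i j, 0 ≤ wM i j)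
    (S T : Finset V) : 0 ≤ moranStep r wR wM S T := by
  unfold moranStep
  apply div_nonneg _ (moran_denom_pos hr S).le
  refine add_nonneg (add_nonneg ?_ ?_) ?_
  · refine Finset.sum_nonneg fun i _ => Finset.sum_nonneg fun j _ => ?_
    split
    · exact mul_nonneg hr.le (hMn i j)
    · exact le_rfl
  · refine Finset.sum_nonneg fun j _ => Finset.sum_nonneg fun i _ => ?_
    split
    · exact hRn j i
    · exact le_rfl
  · split
    · refine add_nonneg ?_ ?_
      · exact Finset.sum_nonneg fun i _ => Finset.sum_nonneg fun j _ =>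
          mul_nonneg hr.le (hMn i j)
      · exact Finset.sum_nonneg fun i _ => Finset.sum_nonneg fun j _ => hRn i j
    · exact le_rfl

lemma moranStep_sum (hr : 0 < r) (hRs : ∀ i, ∑ j, wR i j = 1) (hMs : ∀ i, ∑ j, wM i j = 1)
    (S : Finset V) : ∑ T : Finset V, moranStep r wR wM S T = 1 := by
  unfold moranStep
  rw [← Finset.sum_div, div_eq_one_iff_eq (moran_denom_pos hr S).ne']
  rw [Finset.sum_add_distrib, Finset.sum_add_distrib]
  have h1 : ∑ T : Finset V, ∑ i ∈ S, ∑ j ∈ Sᶜ, (if T = insert j S then r * wM i j else 0)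
      = ∑ i ∈ S, ∑ j ∈ Sᶜ, r * wM i j := by
    rw [Finset.sum_comm]
    refine Finset.sum_congr rfl fun i _ => ?_
    rw [Finset.sum_comm]
    refine Finset.sum_congr rfl fun j _ => ?_
    simp
  have h2 : ∑ T : Finset V, ∑ j ∈ Sᶜ, ∑ i ∈ S, (if T = S.erase i then wR j i else 0)
      = ∑ j ∈ Sᶜ, ∑ i ∈ S, wR j i := by
    rw [Finset.sum_comm]
    refine Finset.sum_congr rfl fun j _ => ?_
    rw [Finset.sum_comm]
    refine Finset.sum_congr rfl fun i _ => ?_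
    simp
  have h3 : ∑ T : Finset V, (if T = S then
      (∑ i ∈ S, ∑ j ∈ S, r * wM i j) + (∑ i ∈ Sᶜ, ∑ j ∈ Sᶜ, wR i j) else 0)
      = (∑ i ∈ S, ∑ j ∈ S, r * wM i j) + (∑ i ∈ Sᶜ, ∑ j ∈ Sᶜ, wR i j) := by simp
  rw [h1, h2, h3]
  have hM : (∑ i ∈ S, ∑ j ∈ Sᶜ, r * wM i j) + (∑ i ∈ S, ∑ j ∈ S, r * wM i j)
      = (S.card : ℝ) * r := by
    rw [← Finset.sum_add_distrib]
    have : ∀ i ∈ S, (∑ j ∈ Sᶜ, r * wM i j) + (∑ j ∈ S, r * wM i j) = r := by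
      intro i _
      rw [Finset.sum_compl_add_sum, ← Finset.mul_sum, hMs i, mul_one]
    rw [Finset.sum_congr rfl this, Finset.sum_const, nsmul_eq_mul]
  have hRsum : (∑ j ∈ Sᶜ, ∑ i ∈ S, wR j i) + (∑ i ∈ Sᶜ, ∑ j ∈ Sᶜ, wR i j)
      = (Fintype.card V : ℝ) - S.card := by
    rw [← Finset.sum_add_distrib]
    have : ∀ j ∈ Sᶜ, (∑ i ∈ S, wR j i) + (∑ i ∈ Sᶜ, wR j i) = 1 := by
      intro j _
      rw [Finset.sum_add_sum_compl, hRs j]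
    rw [Finset.sum_congr rfl this, Finset.sum_const, nsmul_eq_mul, mul_one, Finset.card_compl]
    have : (S.card : ℕ) ≤ Fintype.card V := Finset.card_le_univ S
    push_cast [this]
    ring
  linarith

lemma moranIter_nonneg (hr : 0 < r) (hRn : ∀ i j, 0 ≤ wR i j) (hMn : ∀ i j, 0 ≤ wM i j)
    (t : ℕ) (S T : Finset V) : 0 ≤ moranIter r wR wM t S T := by
  induction t generalizing S with
  | zero =>
    simp only [moranIter]
    split <;> norm_num
  | succ t ih =>
    simp only [moranIter]
    exact Finset.sum_nonneg fun U _ =>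
      mul_nonneg (moranStep_nonneg hr hRn hMn S U) (ih U)

lemma moranIter_le_one (hr : 0 < r) (hRn : ∀ i j, 0 ≤ wR i j) (hMn : ∀ i j, 0 ≤ wM i j)
    (hRs : ∀ i, ∑ j, wR i j = 1) (hMs : ∀ i, ∑ j, wM i j = 1)
    (t : ℕ) (S T : Finset V) : moranIter r wR wM t S T ≤ 1 := by
  induction t generalizing S with
  | zero =>
    simp only [moranIter]
    split <;> norm_num
  | succ t ih =>
    simp only [moranIter]
    calc ∑ U : Finset V, moranStep r wR wM S U * moranIter r wR wM t U T
        ≤ ∑ U : Finset V, moranStep r wR wM S U * 1 :=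
          Finset.sum_le_sum fun U _ =>
            mul_le_mul_of_nonneg_left (ih U) (moranStep_nonneg hr hRn hMn S U)
      _ = 1 := by simp [moranStep_sum hr hRs hMs]

lemma moranIter_empty (t : ℕ) :
    moranIter r wR wM t (∅ : Finset V) Finset.univ = 0 := by
  induction t with
  | zero =>
    simp only [moranIter]
    rw [if_neg]
    exact Finset.univ_nonempty.ne_empty
  | succ t ih =>
    simp only [moranIter]
    refine Finset.sum_eq_zero fun U _ => ?_
    by_cases h : U = ∅
    · rw [h, ih, mul_zero]
    · have : moranStep r wR wM (∅ : Finset V) U = 0 := by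
        simp [moranStep, h]
      rw [this, zero_mul]

lemma moranStep_single_empty (u : V) :
    moranStep r wR wM {u} ∅ =
      (∑ j ∈ ({u} : Finset V)ᶜ, wR j u) / (r + ((Fintype.card V : ℝ) - 1)) := by
  unfold moranStep
  have h1 : ∑ i ∈ ({u} : Finset V), ∑ j ∈ ({u} : Finset V)ᶜ,
      (if (∅ : Finset V) = insert j {u} then r * wM i j else 0) = 0 := by
    refine Finset.sum_eq_zero fun i _ => Finset.sum_eq_zero fun j _ => ?_
    rw [if_neg (Ne.symm (Finset.insert_ne_empty j {u}))]
  have h2 : ∑ j ∈ ({u} : Finset V)ᶜ, ∑ i ∈ ({u} : Finset V),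
      (if (∅ : Finset V) = Finset.erase {u} i then wR j i else 0)
      = ∑ j ∈ ({u} : Finset V)ᶜ, wR j u := by
    refine Finset.sum_congr rfl fun j _ => ?_
    rw [Finset.sum_singleton, if_pos (by rw [Finset.erase_singleton])]
  rw [h1, h2, if_neg (Ne.symm (Finset.singleton_ne_empty u))]
  simp only [zero_add, add_zero, Finset.card_singleton, Nat.cast_one, one_mul]

lemma moranIter_single_bound (hr : 0 < r)
    (hRn : ∀ i j, 0 ≤ wR i j) (hMn : ∀ i j, 0 ≤ wM i j)
    (hRd : ∀ i, wR i i = 0)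
    (hRs : ∀ i, ∑ j, wR i j = 1) (hMs : ∀ i, ∑ j, wM i j = 1)
    (u : V) (t : ℕ) :
    moranIter r wR wM t {u} Finset.univ ≤
      1 - (∑ j ∈ ({u} : Finset V)ᶜ, wR j u) / (r + (Fintype.card V : ℝ)) := by
  have hn1 : (1 : ℝ) ≤ Fintype.card V := by exact_mod_cast Fintype.card_pos
  set c : ℝ := ∑ j ∈ ({u} : Finset V)ᶜ, wR j u with hc
  have hc0 : 0 ≤ c := Finset.sum_nonneg fun j _ => hRn j u
  have hcn : c ≤ (Fintype.card V : ℝ) - 1 := by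
    have hle : c ≤ ∑ j ∈ ({u} : Finset V)ᶜ, (1 : ℝ) := by
      refine Finset.sum_le_sum fun j _ => ?_
      calc wR j u ≤ ∑ k, wR j k :=
            Finset.single_le_sum (fun k _ => hRn j k) (Finset.mem_univ u)
        _ = 1 := hRs j
    rw [Finset.sum_const, nsmul_eq_mul, mul_one, Finset.card_compl,
      Finset.card_singleton] at hle
    calc c ≤ ((Fintype.card V - 1 : ℕ) : ℝ) := hle
      _ = (Fintype.card V : ℝ) - 1 := by
          have : 1 ≤ Fintype.card V := Fintype.card_pos
          push_cast [this]; ring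
  have hd1 : 0 < r + ((Fintype.card V : ℝ) - 1) := by linarith
  have hd2 : 0 < r + (Fintype.card V : ℝ) := by linarith
  have hfrac : c / (r + (Fintype.card V : ℝ)) ≤ c / (r + ((Fintype.card V : ℝ) - 1)) := by
    gcongr
    linarith
  induction t with
  | zero =>
    simp only [moranIter]
    have huniv : (Finset.univ : Finset V) ≠ {u} := by
      intro h
      have h1 := hRs u
      rw [h] at h1
      rw [Finset.sum_singleton, hRd u] at h1
      norm_num at h1
    rw [if_neg huniv]
    have : c / (r + (Fintype.card V : ℝ)) ≤ 1 := by
      rw [div_le_one hd2]; linarith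
    linarith
  | succ t _ =>
    simp only [moranIter]
    have hmem : (∅ : Finset V) ∈ (Finset.univ : Finset (Finset V)) := Finset.mem_univ _
    rw [← Finset.add_sum_erase _ _ hmem, moranIter_empty, mul_zero, zero_add]
    have hle : ∑ U ∈ (Finset.univ : Finset (Finset V)).erase ∅,
        moranStep r wR wM {u} U * moranIter r wR wM t U Finset.univ
        ≤ ∑ U ∈ (Finset.univ : Finset (Finset V)).erase ∅, moranStep r wR wM {u} U := by
      refine Finset.sum_le_sum fun U _ => ?_
      calc moranStep r wR wM {u} U * moranIter r wR wM t U Finset.univ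
          ≤ moranStep r wR wM {u} U * 1 :=
            mul_le_mul_of_nonneg_left (moranIter_le_one hr hRn hMn hRs hMs t U _)
              (moranStep_nonneg hr hRn hMn {u} U)
        _ = moranStep r wR wM {u} U := mul_one _
    have hsum : ∑ U ∈ (Finset.univ : Finset (Finset V)).erase ∅, moranStep r wR wM {u} U
        = 1 - moranStep r wR wM {u} ∅ := by
      rw [Finset.sum_erase_eq_sub hmem, moranStep_sum hr hRs hMs]
    have hstep : c / (r + ((Fintype.card V : ℝ) - 1)) ≤ moranStep r wR wM {u} ∅ := by
      rw [moranStep_single_empty]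
    calc ∑ U ∈ (Finset.univ : Finset (Finset V)).erase ∅,
          moranStep r wR wM {u} U * moranIter r wR wM t U Finset.univ
        ≤ 1 - moranStep r wR wM {u} ∅ := by rw [← hsum]; exact hle
      _ ≤ 1 - c / (r + ((Fintype.card V : ℝ) - 1)) := by linarith
      _ ≤ 1 - c / (r + (Fintype.card V : ℝ)) := by linarith

end Aux

/-- **General upper bound on the fixation probability.** For any pair of strongly connected
weighted digraphs `wR, wM` on `n` vertices and any `r > 0`, the fixation probability of
the two-graph Moran process started from a single uniformly random mutant is at most
`1 − 1/(r + n)`. -/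
theorem fixation_general_upper_bound
    {V : Type*} [Fintype V] [DecidableEq V] [Nonempty V]
    (r : ℝ) (hr : 0 < r) (wR wM : V → V → ℝ)
    (hwR : IsWeightMatrix wR) (hwM : IsWeightMatrix wM)
    (hscR : StronglyConnectedW wR) (hscM : StronglyConnectedW wM) :
    fixProb r wR wM ≤ 1 - 1 / (r + (Fintype.card V : ℝ)) := by
  obtain ⟨hRn, hRd, hRs⟩ := hwR
  obtain ⟨hMn, hMd, hMs⟩ := hwM
  have hn1 : (1 : ℝ) ≤ Fintype.card V := by exact_mod_cast Fintype.card_pos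
  have hn0 : (0 : ℝ) < Fintype.card V := by linarith
  have hd2 : 0 < r + (Fintype.card V : ℝ) := by linarith
  -- per-vertex bound on the fixation probability
  have key : ∀ u : V, fixProbFrom r wR wM {u} ≤
      1 - (∑ j, wR j u) / (r + (Fintype.card V : ℝ)) := by
    intro u
    have hcol : ∑ j ∈ ({u} : Finset V)ᶜ, wR j u = ∑ j, wR j u := by
      have := Finset.sum_compl_add_sum ({u} : Finset V) (fun j => wR j u)
      rw [Finset.sum_singleton, hRd u, add_zero] at this
      exact this
    refine ciSup_le fun t => ?_
    have := moranIter_single_bound hr hRn hMn hRd hRs hMs u t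
    rwa [hcol] at this
  -- sum the per-vertex bounds
  have hsum : ∑ u : V, fixProbFrom r wR wM {u} ≤
      (Fintype.card V : ℝ) - (Fintype.card V : ℝ) / (r + (Fintype.card V : ℝ)) := by
    calc ∑ u : V, fixProbFrom r wR wM {u}
        ≤ ∑ u : V, (1 - (∑ j, wR j u) / (r + (Fintype.card V : ℝ))) :=
          Finset.sum_le_sum fun u _ => key u
      _ = (Fintype.card V : ℝ) - (∑ u : V, ∑ j : V, wR j u) / (r + (Fintype.card V : ℝ)) := by
          rw [Finset.sum_sub_distrib, Finset.sum_const, nsmul_eq_mul, mul_one,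
            Finset.sum_div, Finset.card_univ]
      _ = (Fintype.card V : ℝ) - (Fintype.card V : ℝ) / (r + (Fintype.card V : ℝ)) := by
          rw [Finset.sum_comm]
          simp [hRs]
  -- conclude
  unfold fixProb
  rw [div_le_iff₀ hn0]
  calc ∑ u : V, fixProbFrom r wR wM {u}
      ≤ (Fintype.card V : ℝ) - (Fintype.card V : ℝ) / (r + (Fintype.card V : ℝ)) := hsum
    _ = (1 - 1 / (r + (Fintype.card V : ℝ))) * (Fintype.card V : ℝ) := by
        field_simp
end
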